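/- Let θ(z) = exp(−(1+z)/(1−z)), a singular inner function on the unit disk, and let r_n = 1 − (1/n)2^{-2n}, α_n = 2^{-n}, z_n = r_n e^{iα_n}. Then the sequence {z_n} satisfies the Carleson interpolation condition: inf_n Π_{m≠n} |(z_n − z_m)/(1 − conj(z_m) z_n)| > 0. -/

import Mathlib

/-- `r_n = 1 - (1/n)·2^{-2n}` (indexed so that `n : ℕ` represents index `n+1 ≥ 1`). -/
noncomputable def rseq (n : ℕ) : ℝ :=
  1 - (1 / ((n : ℝ) + 1)) * (2 : ℝ) ^ (-(2 * ((n : ℝ) + 1)))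

/-- `α_n = 2^{-n}` (indexed so that `n : ℕ` represents index `n+1 ≥ 1`). -/
noncomputable def aseq (n : ℕ) : ℝ := (2 : ℝ) ^ (-((n : ℝ) + 1))

/-- The sequence `z_n = r_n e^{iα_n}`. -/
noncomputable def zseq (n : ℕ) : ℂ :=
  (rseq n : ℂ) * Complex.exp ((aseq n : ℂ) * Complex.I)

/-! ### Auxiliary lemmas -/

lemma rpow_neg_nat (b : ℝ) (hb : 0 < b) (k : ℕ) :
    b ^ (-(k:ℝ)) = (b ^ k)⁻¹ := by
  rw [Real.rpow_neg hb.le, Real.rpow_natCast]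

lemma rseq_eq (n : ℕ) : rseq n = 1 - ((4:ℝ) ^ (n+1))⁻¹ / ((n:ℝ) + 1) := by
  unfold rseq
  have h : (2 : ℝ) ^ (-(2 * ((n : ℝ) + 1))) = ((4:ℝ) ^ (n+1))⁻¹ := by
    have e : -(2 * ((n : ℝ) + 1)) = -((2*(n+1) : ℕ) : ℝ) := by push_cast; ring
    rw [e, rpow_neg_nat _ (by norm_num), pow_mul]
    norm_num
  rw [h]; ring

lemma aseq_eq (n : ℕ) : aseq n = ((2:ℝ) ^ (n+1))⁻¹ := by
  unfold aseq
  have e : -((n : ℝ) + 1) = -(((n+1) : ℕ) : ℝ) := by push_cast; ring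
  rw [e, rpow_neg_nat _ (by norm_num)]

lemma Qpos (n : ℕ) : (0:ℝ) < ((4:ℝ) ^ (n+1))⁻¹ := by positivity

lemma Qle (n : ℕ) : ((4:ℝ) ^ (n+1))⁻¹ ≤ 1/4 := by
  rw [inv_le_comm₀ (by positivity) (by norm_num)]
  calc ((1:ℝ)/4)⁻¹ = 4^1 := by norm_num
  _ ≤ 4^(n+1) := by
    apply pow_le_pow_right₀ (by norm_num); omega

lemma one_sub_rseq (n : ℕ) : 1 - rseq n = ((4:ℝ) ^ (n+1))⁻¹ / ((n:ℝ)+1) := by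
  rw [rseq_eq]; ring

lemma rseq_lt_one (n : ℕ) : rseq n < 1 := by
  have := Qpos n
  rw [rseq_eq]
  have : (0:ℝ) < ((4:ℝ) ^ (n+1))⁻¹ / ((n:ℝ)+1) := by positivity
  linarith

lemma rseq_ge (n : ℕ) : 1 - ((4:ℝ) ^ (n+1))⁻¹ ≤ rseq n := by
  rw [rseq_eq]
  have h1 : ((4:ℝ) ^ (n+1))⁻¹ / ((n:ℝ)+1) ≤ ((4:ℝ) ^ (n+1))⁻¹ := by
    apply div_le_self (Qpos n).le
    have : (0:ℝ) ≤ (n:ℝ) := Nat.cast_nonneg n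
    linarith
  linarith

lemma rseq_ge34 (n : ℕ) : 3/4 ≤ rseq n := by
  have := rseq_ge n; have := Qle n; linarith

lemma rseq_pos (n : ℕ) : 0 < rseq n := by have := rseq_ge34 n; linarith

lemma norm_zseq (n : ℕ) : ‖zseq n‖ = rseq n := by
  unfold zseq
  rw [norm_mul, Complex.norm_exp_ofReal_mul_I, Complex.norm_real, Real.norm_eq_abs,
    abs_of_pos (rseq_pos n), mul_one]

lemma normSq_zseq (n : ℕ) : Complex.normSq (zseq n) = rseq n ^ 2 := by
  rw [← Complex.sq_norm, norm_zseq]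

lemma conj_mul_zseq (m n : ℕ) :
    (starRingEnd ℂ) (zseq m) * zseq n
      = ((rseq m * rseq n : ℝ) : ℂ) * Complex.exp (((aseq n - aseq m : ℝ) : ℂ) * Complex.I) := by
  unfold zseq
  rw [map_mul, ← Complex.exp_conj]
  have h1 : (starRingEnd ℂ) ((aseq m : ℂ) * Complex.I) = -((aseq m : ℂ) * Complex.I) := by
    simp [Complex.conj_I, mul_comm]
  rw [h1, Complex.conj_ofReal]
  rw [mul_mul_mul_comm, ← Complex.exp_add]
  push_cast
  ring_nf

lemma normSq_key (z w : ℂ) :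
    Complex.normSq (1 - (starRingEnd ℂ) w * z)
      = Complex.normSq (z - w) + (1 - Complex.normSq z) * (1 - Complex.normSq w) := by
  simp [Complex.normSq_apply, Complex.sub_re, Complex.sub_im, Complex.mul_re, Complex.mul_im,
    Complex.conj_re, Complex.conj_im]
  ring

lemma im_conj_mul (m n : ℕ) :
    ((starRingEnd ℂ) (zseq m) * zseq n).im = rseq m * rseq n * Real.sin (aseq n - aseq m) := by
  rw [conj_mul_zseq]
  rw [show ((aseq n - aseq m : ℝ) : ℂ) = ((aseq n : ℝ):ℂ) - ((aseq m : ℝ):ℂ) by push_cast; ring] at *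
  simp [Complex.mul_im]
  rw [show ((aseq n : ℝ):ℂ) - ((aseq m : ℝ):ℂ) = ((aseq n - aseq m : ℝ) : ℂ) by push_cast; ring,
    Complex.exp_ofReal_mul_I_im]
  exact Or.inl rfl

lemma normSq_ge_im (w : ℂ) : w.im ^ 2 ≤ Complex.normSq (1 - w) := by
  have h1 : (1 - w).im = -w.im := by simp
  have h2 : Complex.normSq (1 - w) = (1-w).re^2 + w.im^2 := by
    rw [Complex.normSq_apply, h1]; ring
  rw [h2]
  nlinarith [sq_nonneg ((1-w).re)]

lemma rseq_ge_hi (m : ℕ) (hm : 1 ≤ m) : 15/16 ≤ rseq m := by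
  have h := rseq_ge m
  have : ((4:ℝ) ^ (m+1))⁻¹ ≤ 1/16 := by
    rw [inv_le_comm₀ (by positivity) (by norm_num)]
    calc ((1:ℝ)/16)⁻¹ = 4^2 := by norm_num
    _ ≤ 4^(m+1) := by apply pow_le_pow_right₀ (by norm_num); omega
  linarith

lemma two_pow_inv_le (a b : ℕ) (h : a ≤ b) : ((2:ℝ)^b)⁻¹ ≤ ((2:ℝ)^a)⁻¹ := by
  apply inv_anti₀ (by positivity)
  exact pow_le_pow_right₀ (by norm_num) h

lemma delta_bounds (n m : ℕ) (h : n < m) :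
    ((2:ℝ)^(n+2))⁻¹ ≤ aseq n - aseq m ∧ aseq n - aseq m ≤ ((2:ℝ)^(n+1))⁻¹ := by
  rw [aseq_eq, aseq_eq]
  have h1 : ((2:ℝ)^(m+1))⁻¹ ≤ ((2:ℝ)^(n+2))⁻¹ := two_pow_inv_le _ _ (by omega)
  have h2 : ((2:ℝ)^(n+2))⁻¹ = ((2:ℝ)^(n+1))⁻¹/2 := by
    rw [pow_succ]; field_simp
  have h3 : (0:ℝ) < ((2:ℝ)^(m+1))⁻¹ := by positivity
  constructor <;> linarith

lemma sin_delta (n m : ℕ) (h : n < m) :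
    (15/16) * ((2:ℝ)^(n+2))⁻¹ ≤ Real.sin (aseq n - aseq m) := by
  obtain ⟨h1, h2⟩ := delta_bounds n m h
  set D := aseq n - aseq m with hD
  have hp2 : (0:ℝ) < ((2:ℝ)^(n+2))⁻¹ := by positivity
  have hle : ((2:ℝ)^(n+1))⁻¹ ≤ 1/2 := by
    calc ((2:ℝ)^(n+1))⁻¹ ≤ ((2:ℝ)^1)⁻¹ := two_pow_inv_le _ _ (by omega)
    _ = 1/2 := by norm_num
  have hDpos : 0 < D := lt_of_lt_of_le hp2 h1
  have hD1 : D ≤ 1 := by linarith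
  have hsin := Real.sin_gt_sub_cube hDpos
  have hD2 : D^2 ≤ 1/4 := by nlinarith
  have hfac : (0:ℝ) ≤ 1 - D^2/4 := by nlinarith
  nlinarith [mul_nonneg (sub_nonneg.2 h1) hfac, hp2, hD2]

/-- Core lower bound on `normSq (1 - conj z_m z_n)` for `n < m`, coming from the
imaginary part (angular separation). -/
lemma core_lower (n m : ℕ) (h : n < m) :
    (2/5) * ((4:ℝ)^(n+2))⁻¹ ≤ Complex.normSq (1 - (starRingEnd ℂ) (zseq m) * zseq n) := by
  have him := im_conj_mul m n
  have hns := normSq_ge_im ((starRingEnd ℂ) (zseq m) * zseq n)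
  rw [him] at hns
  have hs := sin_delta n m h
  have hrm : 15/16 ≤ rseq m := rseq_ge_hi m (by omega)
  have hrn : 3/4 ≤ rseq n := rseq_ge34 n
  have hsq : (((2:ℝ)^(n+2))⁻¹)^2 = ((4:ℝ)^(n+2))⁻¹ := by
    rw [← inv_pow, ← pow_mul]
    norm_num
    rw [show (4:ℝ) = 2^2 by norm_num, ← pow_mul]
    ring_nf
    simp only [one_div]
  have hp2 : (0:ℝ) < ((2:ℝ)^(n+2))⁻¹ := by positivity
  have hsin_pos : 0 < Real.sin (aseq n - aseq m) := lt_of_lt_of_le (by positivity) hs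
  have key : (2/5) * ((4:ℝ)^(n+2))⁻¹ ≤ (rseq m * rseq n * Real.sin (aseq n - aseq m))^2 := by
    rw [← hsq]
    have h1 : (45/64 : ℝ) * ((15/16) * ((2:ℝ)^(n+2))⁻¹)
        ≤ rseq m * rseq n * Real.sin (aseq n - aseq m) := by
      have : (45/64 : ℝ) ≤ rseq m * rseq n := by nlinarith
      nlinarith
    nlinarith
  linarith

/-- Explicit majorant for `1 - ρ(z_n,z_m)^2`. -/
noncomputable def Gbd (n m : ℕ) : ℝ :=
  if (n = 0 ∧ m = 1) ∨ (n = 1 ∧ m = 0) then 1/2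
  else 10 * ((4:ℝ) ^ (max n m))⁻¹ / (((n:ℝ)+1) * ((m:ℝ)+1))

lemma Gbd_symm (n m : ℕ) : Gbd n m = Gbd m n := by
  unfold Gbd
  rw [max_comm]
  by_cases h : (n = 0 ∧ m = 1) ∨ (n = 1 ∧ m = 0)
  · rw [if_pos h, if_pos (by tauto)]
  · rw [if_neg h, if_neg (by tauto)]
    ring

lemma Gbd_nonneg (n m : ℕ) : 0 ≤ Gbd n m := by
  unfold Gbd
  split
  · norm_num
  · positivity

lemma normSq_one_sub_conj_symm (z w : ℂ) :
    Complex.normSq (1 - (starRingEnd ℂ) w * z) = Complex.normSq (1 - (starRingEnd ℂ) z * w) := by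
  rw [← Complex.normSq_conj (1 - (starRingEnd ℂ) w * z)]
  simp [map_sub, map_mul, mul_comm]

lemma pair_bound_lt (n m : ℕ) (h : n < m) :
    (1 - rseq n^2) * (1 - rseq m^2)
      ≤ Gbd n m * Complex.normSq (1 - (starRingEnd ℂ) (zseq m) * zseq n) := by
  by_cases hsp : n = 0 ∧ m = 1
  · obtain ⟨rfl, rfl⟩ := hsp
    have h0 : rseq 0 = 3/4 := by rw [rseq_eq]; norm_num
    have h1 : rseq 1 = 31/32 := by rw [rseq_eq]; norm_num
    have hG : Gbd 0 1 = 1/2 := by unfold Gbd; rw [if_pos (by tauto)]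
    set w := (starRingEnd ℂ) (zseq 1) * zseq 0 with hw
    have hnw : ‖w‖ = 93/128 := by
      rw [hw, norm_mul, RCLike.norm_conj, norm_zseq, norm_zseq, h0, h1]; norm_num
    have hle : (1:ℝ) - 93/128 ≤ ‖1 - w‖ := by
      have := norm_sub_norm_le (1:ℂ) w
      rw [hnw] at this
      simpa using this
    have hns : (35/128:ℝ)^2 ≤ Complex.normSq (1 - w) := by
      rw [← Complex.sq_norm]
      have h35 : (0:ℝ) ≤ 35/128 := by norm_num
      apply pow_le_pow_left₀ h35 (by linarith)
    rw [hG, h0, h1]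
    nlinarith
  · have hmax : max n m = m := max_eq_right h.le
    have hG : Gbd n m = 10 * ((4:ℝ) ^ m)⁻¹ / (((n:ℝ)+1) * ((m:ℝ)+1)) := by
      unfold Gbd
      rw [if_neg, hmax]
      rintro (h1 | h2)
      · exact hsp h1
      · omega
    have hcore := core_lower n m h
    have hn1 : (0:ℝ) < (n:ℝ)+1 := by positivity
    have hm1 : (0:ℝ) < (m:ℝ)+1 := by positivity
    have hLn : 1 - rseq n^2 ≤ 2 * (((4:ℝ) ^ (n+1))⁻¹ / ((n:ℝ)+1)) := by
      have := one_sub_rseq n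
      have h2 := rseq_lt_one n
      have h3 := rseq_pos n
      nlinarith
    have hLm : 1 - rseq m^2 ≤ 2 * (((4:ℝ) ^ (m+1))⁻¹ / ((m:ℝ)+1)) := by
      have := one_sub_rseq m
      have h2 := rseq_lt_one m
      have h3 := rseq_pos m
      nlinarith
    have hLn0 : (0:ℝ) ≤ 1 - rseq n^2 := by
      have := rseq_lt_one n; have := rseq_pos n; nlinarith
    have hLm0 : (0:ℝ) ≤ 1 - rseq m^2 := by
      have := rseq_lt_one m; have := rseq_pos m; nlinarith
    have step1 : (1 - rseq n^2) * (1 - rseq m^2)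
        ≤ 4 * (((4:ℝ) ^ (n+1))⁻¹ * ((4:ℝ) ^ (m+1))⁻¹) / (((n:ℝ)+1) * ((m:ℝ)+1)) := by
      have := mul_le_mul hLn hLm hLm0 (by positivity)
      calc (1 - rseq n^2) * (1 - rseq m^2)
          ≤ 2 * (((4:ℝ) ^ (n+1))⁻¹ / ((n:ℝ)+1)) * (2 * (((4:ℝ) ^ (m+1))⁻¹ / ((m:ℝ)+1))) := this
      _ = 4 * (((4:ℝ) ^ (n+1))⁻¹ * ((4:ℝ) ^ (m+1))⁻¹) / (((n:ℝ)+1) * ((m:ℝ)+1)) := by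
            field_simp
            ring
    have hpow : ((4:ℝ) ^ (n+1))⁻¹ * ((4:ℝ) ^ (m+1))⁻¹ = ((4:ℝ)^m)⁻¹ * ((4:ℝ)^(n+2))⁻¹ := by
      rw [← mul_inv, ← mul_inv, ← pow_add, ← pow_add]
      congr 2
      omega
    rw [hG]
    calc (1 - rseq n^2) * (1 - rseq m^2)
        ≤ 4 * (((4:ℝ) ^ (n+1))⁻¹ * ((4:ℝ) ^ (m+1))⁻¹) / (((n:ℝ)+1) * ((m:ℝ)+1)) := step1
    _ = 10 * ((4:ℝ)^m)⁻¹ / (((n:ℝ)+1) * ((m:ℝ)+1)) * ((2/5) * ((4:ℝ)^(n+2))⁻¹) := by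
        rw [hpow]; ring
    _ ≤ 10 * ((4:ℝ)^m)⁻¹ / (((n:ℝ)+1) * ((m:ℝ)+1))
          * Complex.normSq (1 - (starRingEnd ℂ) (zseq m) * zseq n) := by
        apply mul_le_mul_of_nonneg_left hcore (by positivity)

lemma pair_bound (n m : ℕ) (h : n ≠ m) :
    (1 - rseq n^2) * (1 - rseq m^2)
      ≤ Gbd n m * Complex.normSq (1 - (starRingEnd ℂ) (zseq m) * zseq n) := by
  rcases lt_or_gt_of_ne h with hlt | hgt
  · exact pair_bound_lt n m hlt
  · have := pair_bound_lt m n hgt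
    rw [Gbd_symm, normSq_one_sub_conj_symm]
    linarith [this]

lemma geom_tail (T : Finset ℕ) (t : ℕ) (h : ∀ m ∈ T, t ≤ m) :
    ∑ m ∈ T, ((4:ℝ)^m)⁻¹ ≤ ((4:ℝ)^t)⁻¹ * (4/3) := by
  classical
  set N := (T.sup id) + 1 with hN
  have hsub : T ⊆ Finset.Ico t N := by
    intro m hm
    rw [Finset.mem_Ico]
    exact ⟨h m hm, by
      have : m ≤ T.sup id := Finset.le_sup (f := id) hm
      omega⟩
  have h1 : ∑ m ∈ T, ((4:ℝ)^m)⁻¹ ≤ ∑ m ∈ Finset.Ico t N, ((4:ℝ)^m)⁻¹ := by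
    apply Finset.sum_le_sum_of_subset_of_nonneg hsub
    intros; positivity
  have h2 : ∑ m ∈ Finset.Ico t N, ((4:ℝ)^m)⁻¹
      = ((4:ℝ)^t)⁻¹ * ∑ j ∈ Finset.range (N - t), ((4:ℝ)⁻¹)^j := by
    rw [Finset.sum_Ico_eq_sum_range, Finset.mul_sum]
    apply Finset.sum_congr rfl
    intro j _
    rw [pow_add, mul_inv, inv_pow]
  have h3 : ∑ j ∈ Finset.range (N - t), ((4:ℝ)⁻¹)^j ≤ 4/3 := by
    have := geom_sum_eq (by norm_num : ((4:ℝ)⁻¹) ≠ 1) (N - t)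
    rw [this]
    have hp : (0:ℝ) ≤ ((4:ℝ)⁻¹)^(N-t) := by positivity
    rw [div_le_iff_of_neg (by norm_num : ((4:ℝ)⁻¹ - 1) < 0)]
    nlinarith
  calc ∑ m ∈ T, ((4:ℝ)^m)⁻¹ ≤ ((4:ℝ)^t)⁻¹ * ∑ j ∈ Finset.range (N - t), ((4:ℝ)⁻¹)^j := by
        rw [← h2]; exact h1
  _ ≤ ((4:ℝ)^t)⁻¹ * (4/3) := by
      apply mul_le_mul_of_nonneg_left h3 (by positivity)

lemma Gbd_big (n m : ℕ) (h1 : n < m) (h2 : 2 ≤ m) : Gbd n m ≤ (10/3) * ((4:ℝ)^m)⁻¹ := by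
  unfold Gbd
  rw [if_neg (by omega)]
  rw [max_eq_right h1.le]
  rw [div_le_iff₀ (by positivity)]
  have hq : (0:ℝ) < ((4:ℝ)^m)⁻¹ := by positivity
  have hn : (1:ℝ) ≤ (n:ℝ)+1 := by
    have : (0:ℝ) ≤ (n:ℝ) := Nat.cast_nonneg n
    linarith
  have hm : (3:ℝ) ≤ (m:ℝ)+1 := by
    have : (2:ℝ) ≤ (m:ℝ) := by exact_mod_cast h2
    linarith
  have h4 : (3:ℝ) ≤ ((n:ℝ)+1)*((m:ℝ)+1) := by nlinarith
  nlinarith [mul_le_mul_of_nonneg_left h4 hq.le]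

lemma Gbd_small (n m : ℕ) (h : m < n) (h2 : 2 ≤ n) :
    Gbd n m ≤ 10 * ((4:ℝ)^n)⁻¹ / ((n:ℝ)+1) := by
  unfold Gbd
  rw [if_neg (by omega), max_eq_left h.le]
  have hq : (0:ℝ) < ((4:ℝ)^n)⁻¹ := by positivity
  have hn : (0:ℝ) < (n:ℝ)+1 := by positivity
  have hm : (1:ℝ) ≤ (m:ℝ)+1 := by
    have : (0:ℝ) ≤ (m:ℝ) := Nat.cast_nonneg m
    linarith
  rw [div_le_div_iff₀ (by positivity) hn]
  have h10 : (0:ℝ) ≤ 10 * ((4:ℝ)^n)⁻¹ := by positivity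
  nlinarith [mul_le_mul_of_nonneg_left hm (mul_nonneg h10 hn.le)]

lemma sum_Gbd (n : ℕ) (S : Finset ℕ) (hS : n ∉ S) : ∑ m ∈ S, Gbd n m ≤ 4/5 := by
  classical
  rcases le_or_gt n 1 with hn | hn
  · set p := 1 - n with hp
    rw [← Finset.sum_filter_add_sum_filter_not S (· = p)]
    have hA : ∑ m ∈ S.filter (· = p), Gbd n m ≤ 1/2 := by
      have hsub : S.filter (· = p) ⊆ {p} := by
        intro m hm
        simp only [Finset.mem_filter] at hm
        simp [hm.2]
      calc ∑ m ∈ S.filter (· = p), Gbd n m ≤ ∑ m ∈ ({p} : Finset ℕ), Gbd n m := by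
            apply Finset.sum_le_sum_of_subset_of_nonneg hsub
            intros; exact Gbd_nonneg _ _
      _ = Gbd n p := Finset.sum_singleton _ _
      _ ≤ 1/2 := by
          unfold Gbd
          rw [if_pos (by omega)]
    have hB : ∑ m ∈ S.filter (¬ · = p), Gbd n m ≤ 10/36 := by
      have hge : ∀ m ∈ S.filter (¬ · = p), 2 ≤ m := by
        intro m hm
        simp only [Finset.mem_filter] at hm
        have := hm.1
        have hne : m ≠ n := by rintro rfl; exact hS this
        omega
      calc ∑ m ∈ S.filter (¬ · = p), Gbd n m
          ≤ ∑ m ∈ S.filter (¬ · = p), (10/3) * ((4:ℝ)^m)⁻¹ := by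
            apply Finset.sum_le_sum
            intro m hm
            have h2 := hge m hm
            have hne : m ≠ n := by
              simp only [Finset.mem_filter] at hm
              rintro rfl; exact hS hm.1
            exact Gbd_big n m (by omega) h2
      _ = (10/3) * ∑ m ∈ S.filter (¬ · = p), ((4:ℝ)^m)⁻¹ := by rw [Finset.mul_sum]
      _ ≤ (10/3) * (((4:ℝ)^2)⁻¹ * (4/3)) := by
            apply mul_le_mul_of_nonneg_left (geom_tail _ 2 hge) (by norm_num)
      _ = 10/36 := by norm_num
    linarith
  · rw [← Finset.sum_filter_add_sum_filter_not S (· < n)]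
    have hA : ∑ m ∈ S.filter (· < n), Gbd n m ≤ 10 * ((4:ℝ)^n)⁻¹ * ((n:ℝ)/((n:ℝ)+1)) := by
      have hcard : (S.filter (· < n)).card ≤ n := by
        have : S.filter (· < n) ⊆ Finset.range n := by
          intro m hm
          simp only [Finset.mem_filter] at hm
          exact Finset.mem_range.2 hm.2
        calc (S.filter (· < n)).card ≤ (Finset.range n).card := Finset.card_le_card this
        _ = n := Finset.card_range n
      calc ∑ m ∈ S.filter (· < n), Gbd n m
          ≤ (S.filter (· < n)).card • (10 * ((4:ℝ)^n)⁻¹ / ((n:ℝ)+1)) := by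
            apply Finset.sum_le_card_nsmul
            intro m hm
            simp only [Finset.mem_filter] at hm
            exact Gbd_small n m hm.2 (by omega)
      _ = ((S.filter (· < n)).card : ℝ) * (10 * ((4:ℝ)^n)⁻¹ / ((n:ℝ)+1)) := by
            rw [nsmul_eq_mul]
      _ ≤ (n:ℝ) * (10 * ((4:ℝ)^n)⁻¹ / ((n:ℝ)+1)) := by
            apply mul_le_mul_of_nonneg_right _ (by positivity)
            exact_mod_cast hcard
      _ = 10 * ((4:ℝ)^n)⁻¹ * ((n:ℝ)/((n:ℝ)+1)) := by ring
    have hA' : ∑ m ∈ S.filter (· < n), Gbd n m ≤ 10/16 := by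
      have h1 : ((4:ℝ)^n)⁻¹ ≤ ((4:ℝ)^2)⁻¹ := by
        apply inv_anti₀ (by positivity)
        exact pow_le_pow_right₀ (by norm_num) (by omega : 2 ≤ n)
      have h2 : (n:ℝ)/((n:ℝ)+1) ≤ 1 := by
        rw [div_le_one (by positivity)]; linarith
      have h3 : (0:ℝ) ≤ ((4:ℝ)^n)⁻¹ := by positivity
      calc ∑ m ∈ S.filter (· < n), Gbd n m ≤ 10 * ((4:ℝ)^n)⁻¹ * ((n:ℝ)/((n:ℝ)+1)) := hA
      _ ≤ 10 * ((4:ℝ)^2)⁻¹ * 1 := by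
          apply mul_le_mul (by nlinarith) h2 (by positivity) (by norm_num)
      _ = 10/16 := by norm_num
    have hB : ∑ m ∈ S.filter (¬ · < n), Gbd n m ≤ 40/576 := by
      have hge : ∀ m ∈ S.filter (¬ · < n), n + 1 ≤ m := by
        intro m hm
        simp only [Finset.mem_filter] at hm
        have hne : m ≠ n := by rintro rfl; exact hS hm.1
        omega
      calc ∑ m ∈ S.filter (¬ · < n), Gbd n m
          ≤ ∑ m ∈ S.filter (¬ · < n), (10/3) * ((4:ℝ)^m)⁻¹ := by
            apply Finset.sum_le_sum
            intro m hm
            have := hge m hm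
            exact Gbd_big n m (by omega) (by omega)
      _ = (10/3) * ∑ m ∈ S.filter (¬ · < n), ((4:ℝ)^m)⁻¹ := by rw [Finset.mul_sum]
      _ ≤ (10/3) * (((4:ℝ)^(n+1))⁻¹ * (4/3)) := by
            apply mul_le_mul_of_nonneg_left (geom_tail _ (n+1) hge) (by norm_num)
      _ ≤ 40/576 := by
            have h1 : ((4:ℝ)^(n+1))⁻¹ ≤ ((4:ℝ)^3)⁻¹ := by
              apply inv_anti₀ (by positivity)
              exact pow_le_pow_right₀ (by norm_num) (by omega)
            nlinarith
    linarith

lemma weier {ι : Type*} (S : Finset ι) (f : ι → ℝ) (h0 : ∀ i ∈ S, 0 ≤ f i)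
    (h1 : ∀ i ∈ S, f i ≤ 1) : 1 - ∑ i ∈ S, f i ≤ ∏ i ∈ S, (1 - f i) := by
  classical
  induction S using Finset.cons_induction with
  | empty => simp
  | cons a T ha ih =>
    rw [Finset.sum_cons, Finset.prod_cons]
    have h0' : ∀ i ∈ T, 0 ≤ f i := fun i hi => h0 i (Finset.mem_cons_of_mem hi)
    have h1' : ∀ i ∈ T, f i ≤ 1 := fun i hi => h1 i (Finset.mem_cons_of_mem hi)
    have ihT := ih h0' h1'
    have ha0 : 0 ≤ f a := h0 a (Finset.mem_cons_self a T)
    have ha1 : f a ≤ 1 := h1 a (Finset.mem_cons_self a T)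
    have hsum : 0 ≤ ∑ i ∈ T, f i := Finset.sum_nonneg h0'
    nlinarith [mul_le_mul_of_nonneg_left ihT (by linarith : (0:ℝ) ≤ 1 - f a)]

/-- The sequence `{z_n}` satisfies the Carleson interpolation condition
`inf_n Π_{m ≠ n} |(z_n - z_m)/(1 - conj(z_m) z_n)| > 0` (equivalently, all
finite partial products avoiding the index `n` are uniformly bounded below). -/
theorem zseq_uniformly_separated :
    ∃ δ : ℝ, 0 < δ ∧ ∀ n : ℕ, ∀ S : Finset ℕ, n ∉ S →
      δ ≤ ∏ m ∈ S, ‖(zseq n - zseq m) / (1 - (starRingEnd ℂ) (zseq m) * zseq n)‖ := by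
  refine ⟨2/5, by norm_num, ?_⟩
  intro n S hS
  set g : ℕ → ℝ := fun m => ‖(zseq n - zseq m) / (1 - (starRingEnd ℂ) (zseq m) * zseq n)‖ with hg
  have hApos : ∀ m : ℕ, 0 < (1 - rseq n^2) * (1 - rseq m^2) := by
    intro m
    have h1 := rseq_lt_one n; have h2 := rseq_pos n
    have h3 := rseq_lt_one m; have h4 := rseq_pos m
    have p1 : 0 < 1 - rseq n^2 := by nlinarith
    have p2 : 0 < 1 - rseq m^2 := by nlinarith
    exact mul_pos p1 p2
  have hu : ∀ m : ℕ, Complex.normSq (1 - (starRingEnd ℂ) (zseq m) * zseq n)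
      = Complex.normSq (zseq n - zseq m) + (1 - rseq n^2) * (1 - rseq m^2) := by
    intro m
    rw [normSq_key, normSq_zseq, normSq_zseq]
  have hupos : ∀ m : ℕ, 0 < Complex.normSq (1 - (starRingEnd ℂ) (zseq m) * zseq n) := by
    intro m
    rw [hu m]
    have := Complex.normSq_nonneg (zseq n - zseq m)
    have := hApos m
    linarith
  have hg_sq : ∀ m : ℕ, (g m)^2
      = Complex.normSq (zseq n - zseq m)
        / Complex.normSq (1 - (starRingEnd ℂ) (zseq m) * zseq n) := by
    intro m
    rw [hg]
    simp only [norm_div, div_pow]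
    rw [← Complex.normSq_eq_norm_sq,
      ← Complex.normSq_eq_norm_sq]
  set f : ℕ → ℝ := fun m => 1 - (g m)^2 with hf
  have hf_eq : ∀ m : ℕ, f m
      = (1 - rseq n^2) * (1 - rseq m^2)
        / Complex.normSq (1 - (starRingEnd ℂ) (zseq m) * zseq n) := by
    intro m
    rw [hf]
    simp only
    rw [hg_sq m]
    rw [eq_div_iff (hupos m).ne']
    rw [sub_mul, div_mul_cancel₀ _ (hupos m).ne', one_mul, hu m]
    ring
  have hf0 : ∀ m ∈ S, 0 ≤ f m := by
    intro m _
    rw [hf_eq m]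
    exact div_nonneg (hApos m).le (hupos m).le
  have hf1 : ∀ m ∈ S, f m ≤ 1 := by
    intro m _
    have h := sq_nonneg (g m)
    simp only [hf]
    linarith
  have hfG : ∀ m ∈ S, f m ≤ Gbd n m := by
    intro m hm
    have hne : n ≠ m := by rintro rfl; exact hS hm
    rw [hf_eq m, div_le_iff₀ (hupos m)]
    exact pair_bound n m hne
  have hsum : ∑ m ∈ S, f m ≤ 4/5 := by
    calc ∑ m ∈ S, f m ≤ ∑ m ∈ S, Gbd n m := Finset.sum_le_sum hfG
    _ ≤ 4/5 := sum_Gbd n S hS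
  have hprod : (1:ℝ)/5 ≤ ∏ m ∈ S, (1 - f m) := by
    have := weier S f hf0 hf1
    linarith
  have hprod_eq : ∏ m ∈ S, (1 - f m) = (∏ m ∈ S, g m)^2 := by
    rw [← Finset.prod_pow]
    apply Finset.prod_congr rfl
    intro m _
    simp only [hf, sub_sub_cancel]
  have hPnn : 0 ≤ ∏ m ∈ S, g m := Finset.prod_nonneg fun m _ => norm_nonneg _
  rw [hprod_eq] at hprod
  nlinarith [hprod, hPnn]
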